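/- arXiv:1708.06295 — 2 statements merged into one kernel-verified Lean document; each statement's English description precedes it below -/
import Mathlib

section
/- Let T = ⟨Tree, ⊴⟩ be a temporal frame and let CS be a constant specification. Then every model M ∈ Mod_CS({T}) validates every formula A with ⊢_CS A if and only if T is a mixed successor frame. -/
/-! Preliminaries: temporal frames, stit frames, jstit frames, the language of
JA-STIT, jstit models, satisfaction, and the Hilbert system Σ_D(CS). -/

/-- A temporal frame: a nonempty set of moments with a partial order satisfying
historical connection and no backward branching. -/
structure TemporalFrame (Mo : Type) : Type where
  le : Mo → Mo → Prop
  le_refl : ∀ m, le m m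
  le_antisymm : ∀ {m m'}, le m m' → le m' m → m = m'
  le_trans : ∀ {m1 m2 m3}, le m1 m2 → le m2 m3 → le m1 m3
  nonempty : Nonempty Mo
  hist_conn : ∀ m m1, ∃ m2, le m2 m ∧ le m2 m1
  no_backward : ∀ m m1 m2, le m1 m → le m2 m → le m1 m2 ∨ le m2 m1

namespace TemporalFrame

variable {Mo : Type} (T : TemporalFrame Mo)

/-- The strict companion of the temporal order. -/
def lt (m m' : Mo) : Prop := T.le m m' ∧ m ≠ m'

/-- A history is a maximal chain of moments w.r.t. the temporal order. -/
def IsHistory (h : Set Mo) : Prop :=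
  IsChain T.le h ∧ ∀ h' : Set Mo, IsChain T.le h' → h ⊆ h' → h' = h

/-- `T.H m` is the set of histories passing through the moment `m`. -/
def H (m : Mo) : Set (Set Mo) := { h | T.IsHistory h ∧ m ∈ h }

/-- Histories `h` and `g` are undivided at `m`. -/
def Undiv (m : Mo) (h g : Set Mo) : Prop := ∃ m', T.lt m m' ∧ m' ∈ h ∧ m' ∈ g

/-- `m'` is an immediate successor of `m`. -/
def Next (m m' : Mo) : Prop := T.lt m m' ∧ ∀ m'', T.lt m'' m' → T.le m'' m

/-- Mixed successor condition on (the temporal part of) a frame. -/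
def MixSucc : Prop :=
  ∀ m m1 : Mo,
    (T.lt m m1 → ∃ m2, T.le m2 m1 ∧ T.Next m m2) ∨
    (∀ h ∈ T.H m, ∀ g ∈ T.H m, T.Undiv m h g)

end TemporalFrame

/-- A stit frame for an agent community `Ag`: a temporal frame together with a choice
function assigning to each moment and agent a partition of the histories through that
moment, subject to no choice between undivided histories and independence of agents. -/
structure StitFrame (Mo : Type) (Ag : Type) extends TemporalFrame Mo where
  choice : Mo → Ag → Set (Set (Set Mo))
  choice_cell_nonempty : ∀ m j C, C ∈ choice m j → C.Nonempty
  choice_cell_sub : ∀ m j C, C ∈ choice m j → C ⊆ toTemporalFrame.H m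
  choice_cover : ∀ m j h, h ∈ toTemporalFrame.H m → ∃ C ∈ choice m j, h ∈ C
  choice_disjoint : ∀ m j C C', C ∈ choice m j → C' ∈ choice m j →
    (C ∩ C').Nonempty → C = C'
  no_choice_undiv : ∀ m j h h', h ∈ toTemporalFrame.H m → h' ∈ toTemporalFrame.H m →
    toTemporalFrame.Undiv m h h' → ∀ C ∈ choice m j, h ∈ C → h' ∈ C
  independence : ∀ m (f : Ag → Set (Set Mo)), (∀ j, f j ∈ choice m j) →
    (⋂ j, f j).Nonempty

/-- A justification stit (jstit) frame for `Ag`: a stit frame together with two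
epistemic preorders `R ⊆ R_e`, with the temporal order included in `R`. -/
structure JstitFrame (Mo : Type) (Ag : Type) extends StitFrame Mo Ag where
  R : Mo → Mo → Prop
  Re : Mo → Mo → Prop
  R_refl : ∀ m, R m m
  R_trans : ∀ {m1 m2 m3}, R m1 m2 → R m2 m3 → R m1 m3
  Re_refl : ∀ m, Re m m
  Re_trans : ∀ {m1 m2 m3}, Re m1 m2 → Re m2 m3 → Re m1 m3
  R_sub_Re : ∀ {m m'}, R m m' → Re m m'
  le_sub_R : ∀ {m m'}, le m m' → R m m'

namespace JstitFrame

variable {Mo : Type} {Ag : Type} (F : JstitFrame Mo Ag)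

/-- The family `Θ_m` of subsets of the set of moments associated with a moment `m`. -/
def Theta (m : Mo) : Set (Set Mo) :=
  { S | m ∈ S ∧
    (∀ m1 m2, m1 ∈ S → F.Re m1 m2 → m2 ∈ S) ∧
    (∀ m1, (∀ h ∈ F.toTemporalFrame.H m1,
        ∃ m2 ∈ h, F.toTemporalFrame.Next m1 m2 ∧ m2 ∈ S) → m1 ∈ S) ∧
    (∀ m1, m1 ∈ S →
      (∀ m2, F.toTemporalFrame.lt m2 m1 →
        ∃ m3, F.toTemporalFrame.lt m2 m3 ∧ F.toTemporalFrame.lt m3 m1) →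
      ∃ m4, F.toTemporalFrame.lt m4 m1 ∧ m4 ∈ S) }

/-- A jstit frame is unirelational iff `R_e ⊆ R`. -/
def Unirelational : Prop := ∀ m m', F.Re m m' → F.R m m'

/-- Regularity of a jstit frame. -/
def Regular : Prop :=
  ∀ m m1 : Mo, F.toTemporalFrame.lt m m1 →
    (∃ S : Set Mo,
      (∀ m0, F.toTemporalFrame.lt m m0 → F.le m0 m1 → S ∈ F.Theta m0) ∧
      m ∉ S ∧
      ∃ h' ∈ F.toTemporalFrame.H m,
        (∀ g ∈ F.toTemporalFrame.H m1, ¬ F.toTemporalFrame.Undiv m h' g) ∧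
        (∀ m' ∈ h', F.toTemporalFrame.Next m m' → m' ∉ S)) →
    ∃ m2, F.le m2 m1 ∧ F.toTemporalFrame.Next m m2

end JstitFrame

/-- Proof polynomials over proof variables `PVar` and proof constants `PConst`. -/
inductive Pol (PVar PConst : Type) : Type
  | var : PVar → Pol PVar PConst
  | const : PConst → Pol PVar PConst
  | plus : Pol PVar PConst → Pol PVar PConst → Pol PVar PConst
  | times : Pol PVar PConst → Pol PVar PConst → Pol PVar PConst
  | bang : Pol PVar PConst → Pol PVar PConst

/-- Formulas of JA-STIT. -/
inductive Form (Ag PVar PConst PropVar : Type) : Type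
  | pv : PropVar → Form Ag PVar PConst PropVar
  | and : Form Ag PVar PConst PropVar → Form Ag PVar PConst PropVar →
      Form Ag PVar PConst PropVar
  | neg : Form Ag PVar PConst PropVar → Form Ag PVar PConst PropVar
  | stit : Ag → Form Ag PVar PConst PropVar → Form Ag PVar PConst PropVar
  | box : Form Ag PVar PConst PropVar → Form Ag PVar PConst PropVar
  | proves : Pol PVar PConst → Form Ag PVar PConst PropVar → Form Ag PVar PConst PropVar
  | know : Form Ag PVar PConst PropVar → Form Ag PVar PConst PropVar
  | ann : Pol PVar PConst → Form Ag PVar PConst PropVar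

namespace Form

variable {Ag PVar PConst PropVar : Type}

/-- Implication, defined as usual from `¬` and `∧`. -/
def imp (A B : Form Ag PVar PConst PropVar) : Form Ag PVar PConst PropVar :=
  neg (and A (neg B))

/-- Disjunction, defined as usual. -/
def or (A B : Form Ag PVar PConst PropVar) : Form Ag PVar PConst PropVar :=
  neg (and (neg A) (neg B))

/-- The dual `◇` of the historical necessity modality. -/
def dia (A : Form Ag PVar PConst PropVar) : Form Ag PVar PConst PropVar :=
  neg (box (neg A))

/-- Falsum, defined as usual. -/
def bot [Inhabited PropVar] : Form Ag PVar PConst PropVar :=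
  and (pv default) (neg (pv default))

end Form

/-- Conjunction of a nonempty list of formulas (head plus tail). -/
def andList {Ag PVar PConst PropVar : Type} :
    Form Ag PVar PConst PropVar → List (Form Ag PVar PConst PropVar) →
      Form Ag PVar PConst PropVar
  | A, [] => A
  | A, B :: L => Form.and A (andList B L)

/-- Disjunction of a list of formulas. -/
def bigOr {Ag PVar PConst PropVar : Type} [Inhabited PropVar] :
    List (Form Ag PVar PConst PropVar) → Form Ag PVar PConst PropVar
  | [] => Form.bot
  | [A] => A
  | A :: B :: L => Form.or A (bigOr (B :: L))

/-- A classical propositional tautology: a formula true under every Boolean valuation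
commuting with `∧` and `¬` (all other formulas being treated as atoms). -/
def Tautology {Ag PVar PConst PropVar : Type} (A : Form Ag PVar PConst PropVar) : Prop :=
  ∀ v : Form Ag PVar PConst PropVar → Bool,
    (∀ B C, v (Form.and B C) = (v B && v C)) →
    (∀ B, v (Form.neg B) = !v B) →
    v A = true

/-- The axiom schemes (A0)–(A9) of Σ_D. -/
inductive Ax {Ag PVar PConst PropVar : Type} : Form Ag PVar PConst PropVar → Prop
  -- (A0) classical propositional tautologies
  | a0 {A} : Tautology A → Ax A
  -- (A1) S5 axioms for □
  | boxK {A B} : Ax (Form.imp (Form.box (Form.imp A B))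
      (Form.imp (Form.box A) (Form.box B)))
  | boxT {A} : Ax (Form.imp (Form.box A) A)
  | box4 {A} : Ax (Form.imp (Form.box A) (Form.box (Form.box A)))
  | box5 {A} : Ax (Form.imp (Form.neg (Form.box A)) (Form.box (Form.neg (Form.box A))))
  -- (A1) S5 axioms for each [j]
  | stitK {j : Ag} {A B} : Ax (Form.imp (Form.stit j (Form.imp A B))
      (Form.imp (Form.stit j A) (Form.stit j B)))
  | stitT {j : Ag} {A} : Ax (Form.imp (Form.stit j A) A)
  | stit4 {j : Ag} {A} : Ax (Form.imp (Form.stit j A) (Form.stit j (Form.stit j A)))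
  | stit5 {j : Ag} {A} : Ax (Form.imp (Form.neg (Form.stit j A))
      (Form.stit j (Form.neg (Form.stit j A))))
  -- (A2)
  | a2 {j : Ag} {A} : Ax (Form.imp (Form.box A) (Form.stit j A))
  -- (A3), for pairwise distinct agents
  | a3 {p : Ag × Form Ag PVar PConst PropVar} {L : List (Ag × Form Ag PVar PConst PropVar)} :
      (((p :: L).map Prod.fst).Nodup) →
      Ax (Form.imp
        (andList (Form.dia (Form.stit p.1 p.2)) (L.map fun q => Form.dia (Form.stit q.1 q.2)))
        (Form.dia (andList (Form.stit p.1 p.2) (L.map fun q => Form.stit q.1 q.2))))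
  -- (A4)
  | a4 {s t : Pol PVar PConst} {A B} : Ax (Form.imp (Form.proves s (Form.imp A B))
      (Form.imp (Form.proves t A) (Form.proves (Pol.times s t) B)))
  -- (A5)
  | a5 {t : Pol PVar PConst} {A} : Ax (Form.imp (Form.proves t A)
      (Form.and (Form.proves (Pol.bang t) (Form.proves t A)) (Form.know A)))
  -- (A6)
  | a6 {s t : Pol PVar PConst} {A} : Ax (Form.imp
      (Form.or (Form.proves s A) (Form.proves t A)) (Form.proves (Pol.plus s t) A))
  -- (A7) S4 axioms for K
  | knowK {A B} : Ax (Form.imp (Form.know (Form.imp A B))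
      (Form.imp (Form.know A) (Form.know B)))
  | knowT {A} : Ax (Form.imp (Form.know A) A)
  | know4 {A} : Ax (Form.imp (Form.know A) (Form.know (Form.know A)))
  -- (A8)
  | a8 {A} : Ax (Form.imp (Form.know A) (Form.box (Form.know (Form.box A))))
  -- (A9)
  | a9 {t : Pol PVar PConst} : Ax (Form.imp (Form.box (Form.ann t))
      (Form.know (Form.box (Form.ann t))))

/-- Iterated prefixes `c_n : … : c_1 : A` of instances `A` of the axiom schemes. -/
inductive ConstIter {Ag PVar PConst PropVar : Type} : Form Ag PVar PConst PropVar → Prop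
  | base {c : PConst} {A} : Ax A → ConstIter (Form.proves (Pol.const c) A)
  | step {c : PConst} {B} : ConstIter B → ConstIter (Form.proves (Pol.const c) B)

/-- A constant specification: a set of formulas of the form `c_n : … : c_1 : A` with `A`
an instance of (A0)–(A9), closed under deleting the outermost constant. -/
def IsConstSpec {Ag PVar PConst PropVar : Type}
    (CS : Set (Form Ag PVar PConst PropVar)) : Prop :=
  (∀ B ∈ CS, ConstIter B) ∧
  ∀ (c c' : PConst) (B : Form Ag PVar PConst PropVar),
    Form.proves (Pol.const c) (Form.proves (Pol.const c') B) ∈ CS →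
    Form.proves (Pol.const c') B ∈ CS

/-- Provability in Σ_D(CS): axioms (A0)–(A9), modus ponens (R1), K-necessitation (R2),
the rule (R_D) and the rule (R_CS). -/
inductive Proves {Ag PVar PConst PropVar : Type} [Inhabited PropVar]
    (CS : Set (Form Ag PVar PConst PropVar)) : Form Ag PVar PConst PropVar → Prop
  | ax {A} : Ax A → Proves CS A
  | mp {A B} : Proves CS (Form.imp A B) → Proves CS A → Proves CS B
  | nec {A} : Proves CS A → Proves CS (Form.know A)
  | rd {A : Form Ag PVar PConst PropVar} {ts ss : List (Pol PVar PConst)}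
      (hne : ts ++ ss ≠ []) :
      Proves CS (Form.imp (Form.know A)
        (bigOr ((ts.map fun t => Form.neg (Form.box (Form.ann t))) ++
                (ss.map fun s => Form.box (Form.ann s))))) →
      Proves CS (Form.imp (Form.know A)
        (bigOr ((ts.map fun t => Form.neg (Form.ann t)) ++
                (ss.map fun s => Form.ann s))))
  | rcs {B} : B ∈ CS → Proves CS B

/-- Γ is consistent in Σ_D(CS): no finite nonempty conjunction of members of Γ provably
implies falsum. -/
def CSConsistent {Ag PVar PConst PropVar : Type} [Inhabited PropVar]
    (CS Γ : Set (Form Ag PVar PConst PropVar)) : Prop :=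
  ¬ ∃ (A : Form Ag PVar PConst PropVar) (L : List (Form Ag PVar PConst PropVar)),
      A ∈ Γ ∧ (∀ B ∈ L, B ∈ Γ) ∧ Proves CS (Form.imp (andList A L) Form.bot)

/-- A jstit model for `Ag`: a jstit frame together with `Act`, an admissible evidence
function `E` and an evaluation `V`, subject to the semantical constraints. -/
structure JstitModel (Mo : Type) (Ag PVar PConst PropVar : Type)
    extends JstitFrame Mo Ag where
  act : Mo → Set Mo → Set (Pol PVar PConst)
  ev : Mo → Pol PVar PConst → Set (Form Ag PVar PConst PropVar)
  val : PropVar → Set (Mo × Set Mo)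
  -- monotonicity of evidence
  ev_mono : ∀ m m' t, Re m m' → ev m t ⊆ ev m' t
  -- evidence closure properties
  ev_app : ∀ m s t A B, Form.imp A B ∈ ev m s → A ∈ ev m t → B ∈ ev m (Pol.times s t)
  ev_sum_left : ∀ m s t, ev m s ⊆ ev m (Pol.plus s t)
  ev_sum_right : ∀ m s t, ev m t ⊆ ev m (Pol.plus s t)
  ev_bang : ∀ m t A, A ∈ ev m t → Form.proves t A ∈ ev m (Pol.bang t)
  -- expansion of presented proofs
  expansion : ∀ m m' h, toTemporalFrame.lt m' m → h ∈ toTemporalFrame.H m →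
    act m' h ⊆ act m h
  -- no new proofs guaranteed
  no_new : ∀ m t, (∀ h ∈ toTemporalFrame.H m, t ∈ act m h) →
    ∃ m' h, toTemporalFrame.lt m' m ∧ h ∈ toTemporalFrame.H m ∧ t ∈ act m' h
  -- presenting a new proof makes histories divide
  divide : ∀ m h h', h ∈ toTemporalFrame.H m → h' ∈ toTemporalFrame.H m →
    toTemporalFrame.Undiv m h h' → act m h = act m h'
  -- presented proofs are epistemically transparent
  transparent : ∀ m m' t, Re m m' → (∀ h ∈ toTemporalFrame.H m, t ∈ act m h) →
    ∀ h' ∈ toTemporalFrame.H m', t ∈ act m' h'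

namespace JstitModel

variable {Mo Ag PVar PConst PropVar : Type}

/-- `Act_m`, the set of proofs presented at `m` under every history through `m`. -/
def ActM (M : JstitModel Mo Ag PVar PConst PropVar) (m : Mo) : Set (Pol PVar PConst) :=
  { t | ∀ h ∈ M.toTemporalFrame.H m, t ∈ M.act m h }

/-- The satisfaction relation for jstit models. -/
def Sat (M : JstitModel Mo Ag PVar PConst PropVar) :
    Form Ag PVar PConst PropVar → Mo → Set Mo → Prop
  | Form.pv p, m, h => (m, h) ∈ M.val p
  | Form.and A B, m, h => M.Sat A m h ∧ M.Sat B m h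
  | Form.neg A, m, h => ¬ M.Sat A m h
  | Form.stit j A, m, h => ∀ h' C, C ∈ M.choice m j → h ∈ C → h' ∈ C → M.Sat A m h'
  | Form.box A, m, _ => ∀ h' ∈ M.toTemporalFrame.H m, M.Sat A m h'
  | Form.know A, m, _ => ∀ m' h', M.R m m' → h' ∈ M.toTemporalFrame.H m' → M.Sat A m' h'
  | Form.proves t A, m, _ => A ∈ M.ev m t ∧
      ∀ m' h', M.Re m m' → h' ∈ M.toTemporalFrame.H m' → M.Sat A m' h'
  | Form.ann t, m, h => t ∈ M.act m h

/-- Validity of a formula in a jstit model. -/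
def Valid (M : JstitModel Mo Ag PVar PConst PropVar)
    (A : Form Ag PVar PConst PropVar) : Prop :=
  ∀ m h, h ∈ M.toTemporalFrame.H m → M.Sat A m h

end JstitModel

/-- CS-normality of a jstit model. -/
def CSNormal {Mo Ag PVar PConst PropVar : Type}
    (CS : Set (Form Ag PVar PConst PropVar))
    (M : JstitModel Mo Ag PVar PConst PropVar) : Prop :=
  ∀ (c : PConst) (m : Mo) (A : Form Ag PVar PConst PropVar),
    Form.proves (Pol.const c) A ∈ CS → A ∈ M.ev m (Pol.const c)

/-! ### Auxiliary lemmas -/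

section Aux

open Classical

namespace TemporalFrame

variable {Mo : Type} {T : TemporalFrame Mo}

lemma mem_of_le {h : Set Mo} (hh : T.IsHistory h) {x y : Mo} (hx : x ∈ h)
    (hyx : T.le y x) : y ∈ h := by
  have hchain : IsChain T.le (insert y h) := by
    refine hh.1.insert ?_
    intro z hz hne
    rcases Classical.em (z = x) with rfl | hzx
    · exact Or.inl hyx
    · rcases hh.1 hz hx hzx with hzle | hxle
      · rcases T.no_backward x z y hzle (T.le_trans hyx (T.le_refl x)) with h1 | h1
        · exact Or.inr h1
        · exact Or.inl h1
      · exact Or.inl (T.le_trans hyx hxle)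
  have := hh.2 (insert y h) hchain (Set.subset_insert y h)
  rw [← this]; exact Set.mem_insert y h

lemma isHistory_of_maxChain {h : Set Mo} (hh : IsMaxChain T.le h) : T.IsHistory h :=
  ⟨hh.1, fun h' hc hsub => (hh.2 hc hsub).symm⟩

lemma exists_history_through {s : Set Mo} (hs : IsChain T.le s) :
    ∃ h, T.IsHistory h ∧ s ⊆ h := by
  obtain ⟨t, ht, hsub⟩ := hs.exists_maxChain
  exact ⟨t, isHistory_of_maxChain ht, hsub⟩

lemma exists_history (T : TemporalFrame Mo) (m : Mo) : ∃ h, h ∈ T.H m := by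
  have hs : IsChain T.le ({m} : Set Mo) := Set.subsingleton_singleton.isChain
  obtain ⟨h, hh, hsub⟩ := exists_history_through hs
  exact ⟨h, hh, hsub rfl⟩

lemma exists_history_pair {m m1 : Mo} (h12 : T.le m m1) :
    ∃ h, h ∈ T.H m ∧ m1 ∈ h := by
  have hs : IsChain T.le ({m, m1} : Set Mo) := by
    intro x hx y hy hxy
    simp only [Set.mem_insert_iff, Set.mem_singleton_iff] at hx hy
    rcases hx with rfl | rfl <;> rcases hy with rfl | rfl
    · exact absurd rfl hxy
    · exact Or.inl h12
    · exact Or.inr h12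
    · exact absurd rfl hxy
  obtain ⟨h, hh, hsub⟩ := exists_history_through hs
  exact ⟨h, ⟨hh, hsub (Set.mem_insert m _)⟩, hsub (Set.mem_insert_of_mem _ rfl)⟩

lemma Undiv.symm {m : Mo} {h g : Set Mo} (hu : T.Undiv m h g) : T.Undiv m g h := by
  obtain ⟨m', hm', h1, h2⟩ := hu; exact ⟨m', hm', h2, h1⟩

lemma Undiv.trans {m : Mo} {h g k : Set Mo} (hg : T.IsHistory g)
    (hh : T.IsHistory h) (hk : T.IsHistory k)
    (h1 : T.Undiv m h g) (h2 : T.Undiv m g k) : T.Undiv m h k := by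
  obtain ⟨y1, hy1, hy1h, hy1g⟩ := h1
  obtain ⟨y2, hy2, hy2g, hy2k⟩ := h2
  rcases Classical.em (y1 = y2) with rfl | hne
  · exact ⟨y1, hy1, hy1h, hy2k⟩
  · rcases hg.1 hy1g hy2g hne with hle | hle
    · exact ⟨y1, hy1, hy1h, mem_of_le hk hy2k hle⟩
    · exact ⟨y2, hy2, mem_of_le hh hy1h hle, hy2k⟩

lemma lt_trans_le {a b c : Mo} (h1 : T.lt a b) (h2 : T.le b c) : T.lt a c := by
  refine ⟨T.le_trans h1.1 h2, ?_⟩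
  rintro rfl
  exact h1.2 (T.le_antisymm h1.1 h2)

lemma le_trans_lt {a b c : Mo} (h1 : T.le a b) (h2 : T.lt b c) : T.lt a c := by
  refine ⟨T.le_trans h1 h2.1, ?_⟩
  rintro rfl
  exact h2.2 (T.le_antisymm h2.1 h1)

end TemporalFrame

end Aux
section SatLemmas

open Classical
set_option linter.unusedSectionVars false

variable {Mo Ag PVar PConst PropVar : Type} [Inhabited PropVar]
variable {M : JstitModel Mo Ag PVar PConst PropVar}

namespace JstitModel

lemma sat_and {A B : Form Ag PVar PConst PropVar} {m : Mo} {h : Set Mo} :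
    M.Sat (Form.and A B) m h ↔ (M.Sat A m h ∧ M.Sat B m h) := Iff.rfl

lemma sat_neg {A : Form Ag PVar PConst PropVar} {m : Mo} {h : Set Mo} :
    M.Sat (Form.neg A) m h ↔ ¬ M.Sat A m h := Iff.rfl

lemma sat_imp {A B : Form Ag PVar PConst PropVar} {m : Mo} {h : Set Mo} :
    M.Sat (Form.imp A B) m h ↔ (M.Sat A m h → M.Sat B m h) := by
  unfold Form.imp
  rw [sat_neg, sat_and, sat_neg]
  tauto

lemma sat_or {A B : Form Ag PVar PConst PropVar} {m : Mo} {h : Set Mo} :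
    M.Sat (Form.or A B) m h ↔ (M.Sat A m h ∨ M.Sat B m h) := by
  unfold Form.or
  rw [sat_neg, sat_and, sat_neg, sat_neg]
  tauto

lemma sat_box {A : Form Ag PVar PConst PropVar} {m : Mo} {h : Set Mo} :
    M.Sat (Form.box A) m h ↔ ∀ h' ∈ M.toTemporalFrame.H m, M.Sat A m h' := Iff.rfl

lemma sat_dia {A : Form Ag PVar PConst PropVar} {m : Mo} {h : Set Mo} :
    M.Sat (Form.dia A) m h ↔ ∃ h' ∈ M.toTemporalFrame.H m, M.Sat A m h' := by
  unfold Form.dia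
  rw [sat_neg, sat_box]
  push_neg
  simp only [sat_neg, not_not]

lemma sat_know {A : Form Ag PVar PConst PropVar} {m : Mo} {h : Set Mo} :
    M.Sat (Form.know A) m h ↔
      ∀ m' h', M.R m m' → h' ∈ M.toTemporalFrame.H m' → M.Sat A m' h' := Iff.rfl

lemma sat_ann {t : Pol PVar PConst} {m : Mo} {h : Set Mo} :
    M.Sat (Form.ann t : Form Ag PVar PConst PropVar) m h ↔ t ∈ M.act m h := Iff.rfl

lemma sat_proves {t : Pol PVar PConst} {A : Form Ag PVar PConst PropVar} {m : Mo}
    {h : Set Mo} :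
    M.Sat (Form.proves t A) m h ↔ (A ∈ M.ev m t ∧
      ∀ m' h', M.Re m m' → h' ∈ M.toTemporalFrame.H m' → M.Sat A m' h') := Iff.rfl

lemma sat_stit {j : Ag} {A : Form Ag PVar PConst PropVar} {m : Mo} {h : Set Mo} :
    M.Sat (Form.stit j A) m h ↔
      ∀ h' C, C ∈ M.choice m j → h ∈ C → h' ∈ C → M.Sat A m h' := Iff.rfl

lemma not_sat_bot {m : Mo} {h : Set Mo} :
    ¬ M.Sat (Form.bot : Form Ag PVar PConst PropVar) m h := by
  rw [show (Form.bot : Form Ag PVar PConst PropVar)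
      = Form.and (Form.pv default) (Form.neg (Form.pv default)) from rfl,
    sat_and, sat_neg]
  tauto

lemma sat_bigOr {l : List (Form Ag PVar PConst PropVar)} {m : Mo} {h : Set Mo} :
    M.Sat (bigOr l) m h ↔ ∃ B ∈ l, M.Sat B m h := by
  induction l with
  | nil => simp [bigOr, not_sat_bot]
  | cons A l ih =>
    cases l with
    | nil => simp [bigOr]
    | cons B L =>
      rw [show bigOr (A :: B :: L) = Form.or A (bigOr (B :: L)) from rfl, sat_or, ih]
      simp

lemma sat_andList {A : Form Ag PVar PConst PropVar}
    {L : List (Form Ag PVar PConst PropVar)} {m : Mo} {h : Set Mo} :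
    M.Sat (andList A L) m h ↔ (M.Sat A m h ∧ ∀ B ∈ L, M.Sat B m h) := by
  induction L generalizing A with
  | nil => simp [andList]
  | cons B L ih =>
    rw [show andList A (B :: L) = Form.and A (andList B L) from rfl, sat_and, ih]
    simp only [List.mem_cons, forall_eq_or_imp, and_assoc]

end JstitModel

end SatLemmas
section Soundness

open Classical
set_option linter.unusedSectionVars false

variable {Mo Ag PVar PConst PropVar : Type} [Inhabited PropVar]
variable {M : JstitModel Mo Ag PVar PConst PropVar}

namespace JstitModel

/-- Soundness of the (A0) scheme. -/
lemma tautology_valid {A : Form Ag PVar PConst PropVar} (hA : Tautology A) :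
    M.Valid A := by
  intro m h _
  have hv := hA (fun B => if M.Sat B m h then true else false) ?_ ?_
  · by_contra hns
    simp only [if_neg hns] at hv
    exact Bool.false_ne_true hv
  · intro B C
    by_cases hB : M.Sat B m h <;> by_cases hC : M.Sat C m h <;>
      simp [sat_and (M := M), hB, hC]
  · intro B
    by_cases hB : M.Sat B m h <;> simp [sat_neg (M := M), hB]

lemma ax_valid {A : Form Ag PVar PConst PropVar} (hA : Ax A) : M.Valid A := by
  induction hA with
  | a0 h => exact tautology_valid h
  | @boxK A B =>
    intro m h hh
    rw [sat_imp, sat_box]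
    intro h1
    rw [sat_imp, sat_box, sat_box]
    intro h2 h' hh'
    exact (sat_imp.1 (h1 h' hh')) (h2 h' hh')
  | @boxT A =>
    intro m h hh
    rw [sat_imp, sat_box]
    intro h1
    exact h1 h hh
  | @box4 A =>
    intro m h hh
    rw [sat_imp, sat_box]
    intro h1
    rw [sat_box]
    intro h' hh'
    rw [sat_box]
    intro h'' hh''
    exact h1 h'' hh''
  | @box5 A =>
    intro m h hh
    rw [sat_imp, sat_neg, sat_box]
    intro h1
    rw [sat_box]
    intro h' hh'
    rw [sat_neg, sat_box]
    intro h2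
    refine h1 ?_
    intro h'' hh''
    exact h2 h'' hh''
  | @stitK j A B =>
    intro m h hh
    rw [sat_imp, sat_stit]
    intro h1
    rw [sat_imp, sat_stit]
    intro h2
    rw [sat_stit]
    intro h' C hC hhC hh'C
    exact (sat_imp.1 (h1 h' C hC hhC hh'C)) (h2 h' C hC hhC hh'C)
  | @stitT j A =>
    intro m h hh
    rw [sat_imp, sat_stit]
    intro h1
    obtain ⟨C, hC, hhC⟩ := M.choice_cover m j h hh
    exact h1 h C hC hhC hhC
  | @stit4 j A =>
    intro m h hh
    rw [sat_imp, sat_stit]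
    intro h1
    rw [sat_stit]
    intro h' C hC hhC hh'C
    rw [sat_stit]
    intro h'' C' hC' hh'C' hh''C'
    have hCC' : C = C' := M.choice_disjoint m j C C' hC hC' ⟨h', hh'C, hh'C'⟩
    exact h1 h'' C hC hhC (hCC' ▸ hh''C')
  | @stit5 j A =>
    intro m h hh
    rw [sat_imp, sat_neg, sat_stit]
    intro h1
    rw [sat_stit]
    intro h' C hC hhC hh'C
    rw [sat_neg, sat_stit]
    intro h2
    refine h1 ?_
    intro h'' C' hC' hhC' hh''C'
    have hCC' : C' = C := M.choice_disjoint m j C' C hC' hC ⟨h, hhC', hhC⟩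
    exact h2 h'' C hC hh'C (hCC' ▸ hh''C')
  | @a2 j A =>
    intro m h hh
    rw [sat_imp, sat_box]
    intro h1
    rw [sat_stit]
    intro h' C hC _ hh'C
    exact h1 h' (M.choice_cell_sub m j C hC hh'C)
  | @a4 s t A B =>
    intro m h hh
    rw [sat_imp, sat_proves]
    rintro ⟨he1, h1⟩
    rw [sat_imp, sat_proves]
    rintro ⟨he2, h2⟩
    rw [sat_proves]
    refine ⟨M.ev_app m s t A B he1 he2, ?_⟩
    intro m' h' hre hh'
    exact (sat_imp.1 (h1 m' h' hre hh')) (h2 m' h' hre hh')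
  | @a5 t A =>
    intro m h hh
    rw [sat_imp, sat_proves]
    rintro ⟨he, h1⟩
    rw [sat_and]
    constructor
    · rw [sat_proves]
      refine ⟨M.ev_bang m t A he, ?_⟩
      intro m' h' hre hh'
      rw [sat_proves]
      exact ⟨M.ev_mono m m' t hre he, fun m'' h'' hre' hh'' =>
        h1 m'' h'' (M.Re_trans hre hre') hh''⟩
    · rw [sat_know]
      intro m' h' hr hh'
      exact h1 m' h' (M.R_sub_Re hr) hh'
  | @a6 s t A =>
    intro m h hh
    rw [sat_imp, sat_or]
    intro h1
    rw [sat_proves]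
    rcases h1 with h1 | h1 <;> rw [sat_proves] at h1
    · exact ⟨M.ev_sum_left m s t h1.1, h1.2⟩
    · exact ⟨M.ev_sum_right m s t h1.1, h1.2⟩
  | @knowK A B =>
    intro m h hh
    rw [sat_imp, sat_know]
    intro h1
    rw [sat_imp, sat_know]
    intro h2
    rw [sat_know]
    intro m' h' hr hh'
    exact (sat_imp.1 (h1 m' h' hr hh')) (h2 m' h' hr hh')
  | @knowT A =>
    intro m h hh
    rw [sat_imp, sat_know]
    intro h1
    exact h1 m h (M.R_refl m) hh
  | @know4 A =>
    intro m h hh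
    rw [sat_imp, sat_know]
    intro h1
    rw [sat_know]
    intro m' h' hr hh'
    rw [sat_know]
    intro m'' h'' hr' hh''
    exact h1 m'' h'' (M.R_trans hr hr') hh''
  | @a8 A =>
    intro m h hh
    rw [sat_imp, sat_know]
    intro h1
    rw [sat_box]
    intro h' hh'
    rw [sat_know]
    intro m' h'' hr hh''
    rw [sat_box]
    intro h''' hh'''
    exact h1 m' h''' hr hh'''
  | @a9 t =>
    intro m h hh
    rw [sat_imp, sat_box]
    intro h1
    rw [sat_know]
    intro m' h' hr hh'
    rw [sat_box]
    intro h'' hh''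
    rw [sat_ann]
    refine M.transparent m m' t (M.R_sub_Re hr) ?_ h'' hh''
    intro h0 hh0
    exact sat_ann.1 (h1 h0 hh0)
  | @a3 p L hnd =>
    intro m h hh
    rw [sat_imp, sat_andList]
    rintro ⟨hp, hL⟩
    -- selection of witnessing histories
    have hsel : ∀ q : Ag × Form Ag PVar PConst PropVar, ∃ h',
        q ∈ p :: L → (h' ∈ M.toTemporalFrame.H m ∧ M.Sat (Form.stit q.1 q.2) m h') := by
      intro q
      by_cases hq : q ∈ p :: L
      · rcases List.mem_cons.1 hq with rfl | hqL
        · obtain ⟨h', hh', hs⟩ := sat_dia.1 hp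
          exact ⟨h', fun _ => ⟨hh', hs⟩⟩
        · have := hL _ (List.mem_map_of_mem hqL)
          obtain ⟨h', hh', hs⟩ := sat_dia.1 this
          exact ⟨h', fun _ => ⟨hh', hs⟩⟩
      · exact ⟨h, fun hq' => absurd hq' hq⟩
    choose hist hhist using hsel
    -- choice cells for the witnessing histories
    have hcellsel : ∀ q : Ag × Form Ag PVar PConst PropVar, ∃ C,
        q ∈ p :: L → (C ∈ M.choice m q.1 ∧ hist q ∈ C) := by
      intro q
      by_cases hq : q ∈ p :: L
      · obtain ⟨C, hC, hmem⟩ := M.choice_cover m q.1 (hist q) ((hhist q hq).1)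
        exact ⟨C, fun _ => ⟨hC, hmem⟩⟩
      · exact ⟨∅, fun hq' => absurd hq' hq⟩
    choose cell hcell using hcellsel
    -- the choice profile
    have hdefault : ∀ j : Ag, ∃ C, C ∈ M.choice m j ∧ h ∈ C :=
      fun j => M.choice_cover m j h hh
    set f : Ag → Set (Set Mo) := fun j =>
      if hj : ∃ q ∈ p :: L, q.1 = j then cell hj.choose else (hdefault j).choose with hf
    have hfmem : ∀ j, f j ∈ M.choice m j := by
      intro j
      by_cases hj : ∃ q ∈ p :: L, q.1 = j
      · simp only [hf, dif_pos hj]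
        have hspec := hj.choose_spec
        have := (hcell hj.choose hspec.1).1
        rw [hspec.2] at this
        exact this
      · simp only [hf, dif_neg hj]
        exact (hdefault j).choose_spec.1
    obtain ⟨h', hh'⟩ := M.independence m f hfmem
    have hh'f : ∀ j, h' ∈ f j := by
      intro j
      exact Set.mem_iInter.1 hh' j
    have hkey : ∀ q ∈ p :: L, f q.1 = cell q := by
      intro q hq
      have hj : ∃ q' ∈ p :: L, q'.1 = q.1 := ⟨q, hq, rfl⟩
      simp only [hf, dif_pos hj]
      have hspec := hj.choose_spec
      have : hj.choose = q := List.inj_on_of_nodup_map hnd hspec.1 hq hspec.2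
      rw [this]
    have hsatall : ∀ q ∈ p :: L, M.Sat (Form.stit q.1 q.2) m h' := by
      intro q hq
      rw [sat_stit]
      intro h'' C hC hh'C hh''C
      have hfq : f q.1 = cell q := hkey q hq
      have hCq : cell q ∈ M.choice m q.1 := (hcell q hq).1
      have hC' : C = cell q :=
        M.choice_disjoint m q.1 C (cell q) hC hCq ⟨h', hh'C, hfq ▸ hh'f q.1⟩
      have := (hhist q hq).2
      rw [sat_stit] at this
      exact this h'' (cell q) hCq (hcell q hq).2 (hC' ▸ hh''C)
    rw [sat_dia]
    refine ⟨h', M.choice_cell_sub m p.1 (f p.1) (hfmem p.1) (hh'f p.1), ?_⟩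
    rw [sat_andList]
    constructor
    · exact hsatall p List.mem_cons_self
    · intro B hB
      obtain ⟨q, hqL, rfl⟩ := List.mem_map.1 hB
      exact hsatall q (List.mem_cons_of_mem _ hqL)

end JstitModel

end Soundness
section Soundness2

open Classical
set_option linter.unusedSectionVars false
set_option maxHeartbeats 1000000

variable {Mo Ag PVar PConst PropVar : Type} [Inhabited PropVar]
variable {M : JstitModel Mo Ag PVar PConst PropVar}
variable {CS : Set (Form Ag PVar PConst PropVar)}

namespace JstitModel

lemma mem_H_of_mem {h : Set Mo} {m m' : Mo}
    (hh : h ∈ M.toTemporalFrame.H m) (hm' : m' ∈ h) : h ∈ M.toTemporalFrame.H m' :=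
  ⟨hh.1, hm'⟩

lemma mem_H_of_le {h : Set Mo} {m m' : Mo}
    (hh : h ∈ M.toTemporalFrame.H m') (hle : M.toTemporalFrame.le m m') :
    h ∈ M.toTemporalFrame.H m :=
  ⟨hh.1, TemporalFrame.mem_of_le hh.1 hh.2 hle⟩

lemma constIter_valid (hCS : IsConstSpec CS) (hN : CSNormal CS M) :
    ∀ {B : Form Ag PVar PConst PropVar}, ConstIter B → B ∈ CS → M.Valid B := by
  intro B hCI
  induction hCI with
  | @base c A hA =>
    intro hmem m h hh
    rw [sat_proves]
    exact ⟨hN c m A hmem, fun m' h' _ hh' => ax_valid hA m' h' hh'⟩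
  | @step c B hB ih =>
    intro hmem m h hh
    rw [sat_proves]
    refine ⟨hN c m B hmem, ?_⟩
    have hBCS : B ∈ CS := by
      cases hB with
      | base hA => exact hCS.2 _ _ _ hmem
      | step hB' => exact hCS.2 _ _ _ hmem
    intro m' h' _ hh'
    exact ih hBCS m' h' hh'

lemma proves_valid (hMix : M.toTemporalFrame.MixSucc) (hCS : IsConstSpec CS)
    (hN : CSNormal CS M) {A : Form Ag PVar PConst PropVar}
    (hPr : Proves CS A) : M.Valid A := by
  induction hPr with
  | ax h => exact ax_valid h
  | mp h1 h2 ih1 ih2 =>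
    intro m h hh
    exact sat_imp.1 (ih1 m h hh) (ih2 m h hh)
  | nec h ih =>
    intro m h hh
    rw [sat_know]
    intro m' h' _ hh'
    exact ih m' h' hh'
  | rcs hB => exact constIter_valid hCS hN (hCS.1 _ hB) hB
  | @rd A ts ss hne hprem ih =>
    intro m h hh
    rw [sat_imp]
    intro hKA
    by_contra hno
    rw [sat_bigOr] at hno
    push_neg at hno
    have hEt : ∀ t ∈ ts, t ∈ M.act m h := by
      intro t ht
      have := hno (Form.neg (Form.ann t))
        (List.mem_append_left _ (List.mem_map_of_mem ht))
      rw [sat_neg, sat_ann, not_not] at this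
      exact this
    have hEs : ∀ s ∈ ss, s ∉ M.act m h := by
      intro s hs
      have := hno (Form.ann s)
        (List.mem_append_right _ (List.mem_map_of_mem hs))
      rw [sat_ann] at this
      exact this
    set T := M.toTemporalFrame with hT
    -- the common contradiction step
    have key : ∀ m2, h ∈ T.H m2 → M.Sat (Form.know A) m2 h →
        (∀ t ∈ ts, ∀ h' ∈ T.H m2, t ∈ M.act m2 h') →
        (∀ s ∈ ss, ¬ ∀ h' ∈ T.H m2, s ∈ M.act m2 h') → False := by
      intro m2 hh2 hKA2 hts hss
      have hb := sat_imp.1 (ih m2 h hh2) hKA2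
      rw [sat_bigOr] at hb
      obtain ⟨B, hBmem, hBsat⟩ := hb
      rcases List.mem_append.1 hBmem with hB | hB
      · obtain ⟨t, ht, rfl⟩ := List.mem_map.1 hB
        rw [sat_neg, sat_box] at hBsat
        exact hBsat (fun h' hh' => sat_ann.2 (hts t ht h' hh'))
      · obtain ⟨s, hs, rfl⟩ := List.mem_map.1 hB
        rw [sat_box] at hBsat
        exact hss s hs (fun h' hh' => sat_ann.1 (hBsat h' hh'))
    by_cases hy : ∃ y ∈ h, T.lt m y
    · obtain ⟨y, hyh, hmy⟩ := hy
      rcases hMix m y with hnext | hundiv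
      · -- a next moment below y exists
        obtain ⟨m2, hm2y, hm2next⟩ := hnext hmy
        have hm2h : m2 ∈ h := TemporalFrame.mem_of_le hh.1 hyh hm2y
        have hh2 : h ∈ T.H m2 := mem_H_of_mem hh hm2h
        have hRmm2 : M.R m m2 := M.le_sub_R hm2next.1.1
        -- every history through m2 is undivided from h at m
        have hund : ∀ h' ∈ T.H m2, h' ∈ T.H m ∧ M.act m h' = M.act m h := by
          intro h' hh'
          have hmh' : m ∈ h' := TemporalFrame.mem_of_le hh'.1 hh'.2 hm2next.1.1
          have hh'm : h' ∈ T.H m := mem_H_of_mem hh' hmh'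
          exact ⟨hh'm, M.divide m h' h hh'm hh ⟨m2, hm2next.1, hh'.2, hm2h⟩⟩
        refine key m2 hh2 ?_ ?_ ?_
        · rw [sat_know]
          intro m' h' hr hh'
          exact hKA m' h' (M.R_trans hRmm2 hr) hh'
        · intro t ht h' hh'
          have h1 : t ∈ M.act m h' := (hund h' hh').2 ▸ hEt t ht
          exact M.expansion m2 m h' hm2next.1 hh' h1
        · intro s hs hall
          obtain ⟨m'', h'', hm''m2, hh''2, hsm''⟩ := M.no_new m2 s hall
          have hm''m : T.le m'' m := hm2next.2 m'' hm''m2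
          have hsmh'' : s ∈ M.act m h'' := by
            rcases Classical.em (m'' = m) with rfl | hne'
            · exact hsm''
            · exact M.expansion m m'' h'' ⟨hm''m, hne'⟩ (hund h'' hh''2).1 hsm''
          have := (hund h'' hh''2).2 ▸ hsmh''
          exact hEs s hs this
      · -- all histories through m are undivided at m
        refine key m hh hKA ?_ ?_
        · intro t ht h' hh'
          exact (M.divide m h' h hh' hh (hundiv h' hh' h hh)) ▸ hEt t ht
        · intro s hs hall
          exact hEs s hs (hall h hh)
    · -- m is maximal in h, hence h is the only history through m
      push_neg at hy
      have hnolt : ∀ m1, ¬ T.lt m m1 := by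
        intro m1 hm1
        have hchain : IsChain T.le (insert m1 h) := by
          refine hh.1.1.insert ?_
          intro z hz _
          have hzm : T.le z m := by
            rcases Classical.em (z = m) with rfl | hne'
            · exact T.le_refl z
            · rcases hh.1.1 hz hh.2 hne' with hle | hle
              · exact hle
              · exact absurd (⟨hle, fun he => hne' he.symm⟩ : T.lt m z) (hy z hz)
          exact Or.inr (T.le_trans hzm hm1.1)
        have := hh.1.2 (insert m1 h) hchain (Set.subset_insert m1 h)
        have hm1h : m1 ∈ h := by rw [← this]; exact Set.mem_insert m1 h
        exact hy m1 hm1h hm1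
      have honly : ∀ h' ∈ T.H m, h' = h := by
        intro h' hh'
        have hsub : ∀ {g : Set Mo}, g ∈ T.H m → ∀ z ∈ g, T.le z m := by
          intro g hg z hz
          rcases Classical.em (z = m) with rfl | hne'
          · exact T.le_refl z
          · rcases hg.1.1 hz hg.2 hne' with hle | hle
            · exact hle
            · exact absurd ⟨hle, fun he => hne' he.symm⟩ (hnolt z)
        have hchain : IsChain T.le (h ∪ h') := by
          intro a ha b hb hab
          have ha' : T.le a m := by
            rcases ha with ha | ha
            · exact hsub hh a ha
            · exact hsub hh' a ha
          have hb' : T.le b m := by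
            rcases hb with hb | hb
            · exact hsub hh b hb
            · exact hsub hh' b hb
          exact T.no_backward m a b ha' hb'
        have h1 := hh.1.2 (h ∪ h') hchain Set.subset_union_left
        have h2 := hh'.1.2 (h ∪ h') hchain Set.subset_union_right
        rw [← h2]
        exact h1
      refine key m hh hKA ?_ ?_
      · intro t ht h' hh'
        rw [honly h' hh']
        exact hEt t ht
      · intro s hs hall
        exact hEs s hs (hall h hh)

end JstitModel

end Soundness2
/-! ### The countermodel for non mixed successor frames -/

namespace Counter

open Classical TemporalFrame
set_option linter.unusedSectionVars false

variable {Mo PVar PConst : Type}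

/-- `h'` coincides with or is undivided at `m` from the distinguished history. -/
def EqU (T : TemporalFrame Mo) (m : Mo) (hD h' : Set Mo) : Prop :=
  h' = hD ∨ T.Undiv m h' hD

def tcond (T : TemporalFrame Mo) (m : Mo) (hD : Set Mo) (m' : Mo) (h' : Set Mo) : Prop :=
  T.le m m' ∧ m ∈ h' ∧ EqU T m hD h'

def scond (T : TemporalFrame Mo) (m : Mo) (hD : Set Mo) (m' : Mo) (h' : Set Mo) : Prop :=
  m ∈ h' ∧ EqU T m hD h' ∧ ∃ x, x ∈ h' ∧ T.lt m x ∧ T.le x m'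

def actF (tp sp : Pol PVar PConst) (T : TemporalFrame Mo) (m : Mo) (hD : Set Mo)
    (m' : Mo) (h' : Set Mo) : Set (Pol PVar PConst) :=
  {u | (u = tp ∧ tcond T m hD m' h') ∨ (u = sp ∧ scond T m hD m' h')}

section Lemmas

variable {T : TemporalFrame Mo} {m m1 : Mo} {hD g0 : Set Mo} {tp sp : Pol PVar PConst}

lemma tp_mem (htps : tp ≠ sp) {m' : Mo} {h' : Set Mo} :
    tp ∈ actF tp sp T m hD m' h' ↔ tcond T m hD m' h' := by
  constructor
  · rintro (⟨_, hc⟩ | ⟨he, _⟩)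
    · exact hc
    · exact absurd he htps
  · intro hc
    exact Or.inl ⟨rfl, hc⟩

lemma sp_mem (htps : tp ≠ sp) {m' : Mo} {h' : Set Mo} :
    sp ∈ actF tp sp T m hD m' h' ↔ scond T m hD m' h' := by
  constructor
  · rintro (⟨he, _⟩ | ⟨_, hc⟩)
    · exact absurd he.symm htps
    · exact hc
  · intro hc
    exact Or.inr ⟨rfl, hc⟩

lemma undiv_hD_self (hm1D : m1 ∈ hD) (hlt : T.lt m m1) : T.Undiv m hD hD := ⟨m1, hlt, hm1D, hm1D⟩

lemma not_EqU_g0 (hm1D : m1 ∈ hD) (hlt : T.lt m m1) (hgnd : ¬ T.Undiv m hD g0) : ¬ EqU T m hD g0 := by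
  rintro (rfl | hu)
  · exact hgnd (undiv_hD_self hm1D hlt)
  · exact hgnd hu.symm

lemma EqU_transfer (hDm : hD ∈ T.H m) {h1 h2 : Set Mo} (hh1 : T.IsHistory h1) (hh2 : T.IsHistory h2)
    (hu : T.Undiv m h2 h1) (he : EqU T m hD h1) : EqU T m hD h2 := by
  rcases he with rfl | he
  · exact Or.inr hu
  · exact Or.inr (TemporalFrame.Undiv.trans hh1 hh2 hDm.1 hu he)

/-- Density of the distinguished history above `m`. -/
lemma hdense (hDm : hD ∈ T.H m) (hm1D : m1 ∈ hD) (hlt : T.lt m m1)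
    (hnonext : ∀ m2, T.le m2 m1 → ¬ T.Next m m2) {v : Mo} (hmv : T.lt m v) (hvD : v ∈ hD) :
    ∃ w, T.lt m w ∧ T.lt w v ∧ w ∈ hD := by
  by_cases hvm1 : T.le v m1
  · have hnn := hnonext v hvm1
    rw [TemporalFrame.Next] at hnn
    push_neg at hnn
    obtain ⟨w, hwv, hwm⟩ := hnn hmv
    have hcomp := T.no_backward v w m hwv.1 hmv.1
    have hmw : T.lt m w := by
      rcases hcomp with hc | hc
      · exact absurd hc hwm
      · exact ⟨hc, fun he => hwm (he ▸ T.le_refl m)⟩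
    exact ⟨w, hmw, hwv, mem_of_le hDm.1 hvD hwv.1⟩
  · have hne : v ≠ m1 := fun he => hvm1 (he ▸ T.le_refl v)
    have hm1v : T.le m1 v := by
      rcases hDm.1.1 hvD hm1D hne with hc | hc
      · exact absurd hc hvm1
      · exact hc
    have hnn := hnonext m1 (T.le_refl m1)
    rw [TemporalFrame.Next] at hnn
    push_neg at hnn
    obtain ⟨w, hwm1, hwm⟩ := hnn hlt
    have hcomp := T.no_backward m1 w m hwm1.1 hlt.1
    have hmw : T.lt m w := by
      rcases hcomp with hc | hc
      · exact absurd hc hwm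
      · exact ⟨hc, fun he => hwm (he ▸ T.le_refl m)⟩
    exact ⟨w, hmw, lt_trans_le hwm1 hm1v, mem_of_le hDm.1 hm1D hwm1.1⟩

lemma act_mono {m' m'' : Mo} {h' : Set Mo} (hle : T.le m' m'') :
    actF tp sp T m hD m' h' ⊆ actF tp sp T m hD m'' h' := by
  rintro u (⟨he, hc⟩ | ⟨he, hc⟩)
  · exact Or.inl ⟨he, T.le_trans hc.1 hle, hc.2.1, hc.2.2⟩
  · refine Or.inr ⟨he, hc.1, hc.2.1, ?_⟩
    obtain ⟨x, hx, hmx, hxm'⟩ := hc.2.2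
    exact ⟨x, hx, hmx, T.le_trans hxm' hle⟩

lemma divide_sub (hDm : hD ∈ T.H m) {m' : Mo} {h1 h2 : Set Mo} (hh1 : h1 ∈ T.H m') (hh2 : h2 ∈ T.H m')
    (hu : T.Undiv m' h1 h2) :
    actF tp sp T m hD m' h1 ⊆ actF tp sp T m hD m' h2 := by
  obtain ⟨y, hy, hyh1, hyh2⟩ := hu
  rintro u (⟨he, hmm', hmh1, heq⟩ | ⟨he, hmh1, heq, x, hxh1, hmx, hxm'⟩)
  · have hmy : T.lt m y := le_trans_lt hmm' hy
    have hu' : T.Undiv m h2 h1 := ⟨y, hmy, hyh2, hyh1⟩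
    exact Or.inl ⟨he, hmm', mem_of_le hh2.1 hh2.2 hmm',
      EqU_transfer hDm hh1.1 hh2.1 hu' heq⟩
  · have hmm' : T.le m m' := T.le_trans hmx.1 hxm'
    have hmy : T.lt m y := le_trans_lt hmm' hy
    have hu' : T.Undiv m h2 h1 := ⟨y, hmy, hyh2, hyh1⟩
    exact Or.inr ⟨he, mem_of_le hh2.1 hh2.2 hmm',
      EqU_transfer hDm hh1.1 hh2.1 hu' heq,
      x, mem_of_le hh2.1 hh2.2 hxm', hmx, hxm'⟩

end Lemmas

end Counter

namespace Counter

open Classical TemporalFrame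
set_option linter.unusedSectionVars false

variable {Mo PVar PConst : Type}
variable {T : TemporalFrame Mo} {m m1 : Mo} {hD g0 : Set Mo} {tp sp : Pol PVar PConst}

lemma no_new_act (htps : tp ≠ sp) (hDm : hD ∈ T.H m) (hm1D : m1 ∈ hD) (hlt : T.lt m m1)
    (hnonext : ∀ m2, T.le m2 m1 → ¬ T.Next m m2)
    (hg0 : g0 ∈ T.H m) (hgnd : ¬ T.Undiv m hD g0) {m' : Mo} {u : Pol PVar PConst}
    (hall : ∀ h' ∈ T.H m', u ∈ actF tp sp T m hD m' h') :
    ∃ m'' h', T.lt m'' m' ∧ h' ∈ T.H m' ∧ u ∈ actF tp sp T m hD m'' h' := by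
  obtain ⟨h0, hh0⟩ := T.exists_history m'
  rcases hall h0 hh0 with ⟨rfl, htc⟩ | ⟨rfl, hsc⟩
  · -- the proof `tp`
    have hne : m ≠ m' := by
      rintro rfl
      exact not_EqU_g0 hm1D hlt hgnd ((tp_mem htps).1 (hall g0 hg0)).2.2
    exact ⟨m, h0, ⟨htc.1, hne⟩, hh0, Or.inl ⟨rfl, T.le_refl m, htc.2.1, htc.2.2⟩⟩
  · -- the proof `sp`
    obtain ⟨hmh0, heq, x, hxh0, hmx, hxm'⟩ := hsc
    obtain ⟨y, hmy, hyh0, hyD⟩ : ∃ y, T.lt m y ∧ y ∈ h0 ∧ y ∈ hD := by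
      rcases heq with rfl | ⟨y, hy, h1, h2⟩
      · exact ⟨x, hmx, hxh0, hxh0⟩
      · exact ⟨y, hy, h1, h2⟩
    obtain ⟨v, hmv, hvm', hvD⟩ : ∃ v, T.lt m v ∧ T.le v m' ∧ v ∈ hD := by
      by_cases hyle : T.le y m'
      · exact ⟨y, hmy, hyle, hyD⟩
      · have hne : y ≠ m' := fun he => hyle (he ▸ T.le_refl y)
        have hm'y : T.le m' y := by
          rcases hh0.1.1 hyh0 hh0.2 hne with hc | hc
          · exact absurd hc hyle
          · exact hc
        exact ⟨m', lt_trans_le hmx hxm', T.le_refl m', mem_of_le hDm.1 hyD hm'y⟩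
    obtain ⟨w, hmw, hwv, hwD⟩ := hdense hDm hm1D hlt hnonext hmv hvD
    have hwm' : T.lt w m' := lt_trans_le hwv hvm'
    have hwh0 : w ∈ h0 := mem_of_le hh0.1 hh0.2 hwm'.1
    exact ⟨w, h0, hwm', hh0, Or.inr ⟨rfl, hmh0, heq, w, hwh0, hmw, T.le_refl w⟩⟩

end Counter
set_option maxHeartbeats 1000000 in
/-- Theorem 4: every CS-normal jstit model based on a temporal frame `T`
validates all theorems of Σ_D(CS) iff `T` is a mixed successor frame. -/
theorem stmt12 {Mo Ag PVar PConst PropVar : Type} [Finite Ag]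
    [Countable PVar] [Infinite PVar] [Countable PConst] [Infinite PConst]
    [Countable PropVar] [Infinite PropVar] [Inhabited PropVar]
    (T : TemporalFrame Mo)
    (CS : Set (Form Ag PVar PConst PropVar)) (hCS : IsConstSpec CS) :
    (∀ M : JstitModel Mo Ag PVar PConst PropVar,
        M.toTemporalFrame = T → CSNormal CS M →
        ∀ A : Form Ag PVar PConst PropVar, Proves CS A → M.Valid A) ↔
      T.MixSucc := by
  classical
  constructor
  · intro hval
    by_contra hns
    rw [TemporalFrame.MixSucc] at hns
    push_neg at hns
    obtain ⟨m, m1, ⟨hlt, hnonext⟩, h0, hh0, g1, hg1, hnd⟩ := hns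
    obtain ⟨hD, hDm, hm1D⟩ := TemporalFrame.exists_history_pair (T := T) hlt.1
    have hg0ex : ∃ g0, g0 ∈ T.H m ∧ ¬ T.Undiv m hD g0 := by
      by_contra hc
      push_neg at hc
      have h1 : T.Undiv m hD h0 := hc h0 hh0
      have h2 : T.Undiv m hD g1 := hc g1 hg1
      exact hnd (TemporalFrame.Undiv.trans hDm.1 hh0.1 hg1.1 h1.symm h2)
    obtain ⟨g0, hg0, hgnd⟩ := hg0ex
    obtain ⟨x0⟩ : Nonempty PVar := inferInstance
    have htps : (Pol.var x0 : Pol PVar PConst) ≠ Pol.bang (Pol.var x0) :=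
      fun h => by cases h
    set tp : Pol PVar PConst := Pol.var x0 with htp
    set sp : Pol PVar PConst := Pol.bang (Pol.var x0) with hsp
    set M : JstitModel Mo Ag PVar PConst PropVar :=
      { toTemporalFrame := T
        choice := fun m' _ => {T.H m'}
        choice_cell_nonempty := fun m' j C hC => by
          rw [Set.mem_singleton_iff] at hC
          rw [hC]
          exact T.exists_history m'
        choice_cell_sub := fun m' j C hC => by
          rw [Set.mem_singleton_iff] at hC
          rw [hC]
        choice_cover := fun m' j h hh => ⟨T.H m', Set.mem_singleton _, hh⟩
        choice_disjoint := fun m' j C C' hC hC' _ => by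
          rw [Set.mem_singleton_iff] at hC hC'
          rw [hC, hC']
        no_choice_undiv := fun m' j h h' hh hh' hu C hC hhC => by
          rw [Set.mem_singleton_iff] at hC
          rw [hC]
          exact hh'
        independence := fun m' f hf => by
          obtain ⟨hh, hhm⟩ := T.exists_history m'
          refine ⟨hh, Set.mem_iInter.2 fun j => ?_⟩
          rw [Set.mem_singleton_iff.1 (hf j)]
          exact hhm
        R := T.le
        Re := T.le
        R_refl := T.le_refl
        R_trans := T.le_trans
        Re_refl := T.le_refl
        Re_trans := T.le_trans
        R_sub_Re := fun h => h
        le_sub_R := fun h => h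
        act := Counter.actF tp sp T m hD
        ev := fun _ _ => Set.univ
        val := fun _ => ∅
        ev_mono := fun _ _ _ _ => subset_rfl
        ev_app := fun _ _ _ _ _ _ _ => Set.mem_univ _
        ev_sum_left := fun _ _ _ => Set.subset_univ _
        ev_sum_right := fun _ _ _ => Set.subset_univ _
        ev_bang := fun _ _ _ _ => Set.mem_univ _
        expansion := fun m' m'' h' hlt' _ => Counter.act_mono hlt'.1
        no_new := fun m' u hall =>
          Counter.no_new_act htps hDm hm1D hlt hnonext hg0 hgnd hall
        divide := fun m' h1 h2 hh1 hh2 hu =>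
          Set.Subset.antisymm (Counter.divide_sub hDm hh1 hh2 hu)
            (Counter.divide_sub hDm hh2 hh1 hu.symm)
        transparent := fun m' m'' u hre hall h'' hh'' =>
          Counter.act_mono hre
            (hall h'' ⟨hh''.1, TemporalFrame.mem_of_le hh''.1 hh''.2 hre⟩) } with hMdef
    -- the refuted theorem
    set A : Form Ag PVar PConst PropVar :=
      Form.or (Form.neg (Form.box (Form.ann tp))) (Form.box (Form.ann sp)) with hA
    have hprem : Proves CS (Form.imp (Form.know A)
        (bigOr ((([tp]).map fun t => Form.neg (Form.box (Form.ann t))) ++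
          (([sp]).map fun s => Form.box (Form.ann s))))) := by
      exact Proves.ax Ax.knowT
    have hconc : Proves CS (Form.imp (Form.know A)
        (bigOr ((([tp]).map fun t => Form.neg (Form.ann t)) ++
          (([sp]).map fun s => Form.ann s)))) :=
      Proves.rd (by simp) hprem
    have hvalid := hval M rfl (fun _ _ _ _ => Set.mem_univ _) _ hconc
    have hsat := hvalid m hD hDm
    rw [JstitModel.sat_imp] at hsat
    -- the antecedent `K A` holds at (m, hD)
    have hKA : M.Sat (Form.know A) m hD := by
      rw [JstitModel.sat_know]
      intro m' h' hr hh'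
      rw [hA, JstitModel.sat_or]
      by_cases hbox : ∀ h'' ∈ T.H m', tp ∈ Counter.actF tp sp T m hD m' h''
      · right
        rw [JstitModel.sat_box]
        have hne : m ≠ m' := by
          rintro rfl
          exact Counter.not_EqU_g0 hm1D hlt hgnd
            ((Counter.tp_mem htps).1 (hbox g0 hg0)).2.2
        intro h'' hh''
        rw [JstitModel.sat_ann]
        have htc := (Counter.tp_mem htps).1 (hbox h'' hh'')
        exact (Counter.sp_mem htps).2
          ⟨htc.2.1, htc.2.2, m', hh''.2, ⟨hr, hne⟩, T.le_refl m'⟩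
      · left
        rw [JstitModel.sat_neg, JstitModel.sat_box]
        intro hc
        exact hbox fun h'' hh'' => (JstitModel.sat_ann).1 (hc h'' hh'')
    have hcons := hsat hKA
    rw [JstitModel.sat_bigOr] at hcons
    obtain ⟨B, hBmem, hBsat⟩ := hcons
    simp only [List.map_cons, List.map_nil, List.cons_append, List.nil_append,
      List.mem_cons, List.not_mem_nil, or_false, List.mem_singleton] at hBmem
    rcases hBmem with rfl | rfl
    · -- ¬ E tp fails at (m, hD)
      rw [JstitModel.sat_neg, JstitModel.sat_ann] at hBsat
      exact hBsat ((Counter.tp_mem htps).2 ⟨T.le_refl m, hDm.2, Or.inl rfl⟩)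
    · -- E sp holds at (m, hD): impossible
      rw [JstitModel.sat_ann] at hBsat
      obtain ⟨_, _, x, _, hmx, hxm⟩ := (Counter.sp_mem htps).1 hBsat
      exact hmx.2 (T.le_antisymm hmx.1 hxm)
  · intro hmix M hM hnorm A hA
    exact JstitModel.proves_valid (hM ▸ hmix) hCS hnorm hA
end

section
/- Let CS be a constant specification, let x and y be distinct proof variables, and let F = ⟨Tree, ⊴, Choice, R, R_e⟩ be a jstit frame for Ag that is not regular. Then there is a CS-normal jstit model M based on F and a moment-history pair (m, h) of M such that M, m, h ⊭ K(□Ex ∨ ¬□Ey) → (Ex ∨ ¬Ey). -/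
namespace Stmt15Aux

theorem hist_comm {Mo : Type} (T : TemporalFrame Mo) {h : Set Mo} (hh : T.IsHistory h)
    {a b : Mo} (ha : a ∈ h) (hb : b ∈ h) : T.le a b ∨ T.le b a := by
  rcases eq_or_ne a b with rfl | hne
  · exact Or.inl (T.le_refl a)
  · exact hh.1 ha hb hne

theorem hist_down {Mo : Type} (T : TemporalFrame Mo) {h : Set Mo} (hh : T.IsHistory h)
    {a b : Mo} (ha : a ∈ h) (hba : T.le b a) : b ∈ h := by
  have hch : IsChain T.le (insert b h) := by
    intro u hu v hv huv
    rcases hu with rfl | hu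
    · rcases hv with rfl | hv
      · exact absurd rfl huv
      · rcases hist_comm T hh hv ha with h1 | h1
        · exact (T.no_backward a v u h1 hba).symm
        · exact Or.inl (T.le_trans hba h1)
    · rcases hv with rfl | hv
      · rcases hist_comm T hh hu ha with h1 | h1
        · exact T.no_backward a u v h1 hba
        · exact Or.inr (T.le_trans hba h1)
      · exact hh.1 hu hv huv
  have heq := hh.2 _ hch (Set.subset_insert b h)
  rw [← heq]; exact Set.mem_insert b h

theorem exists_hist {Mo : Type} (T : TemporalFrame Mo) (m : Mo) : ∃ h, h ∈ T.H m := by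
  have hc : IsChain T.le ({m} : Set Mo) := Set.subsingleton_singleton.isChain
  obtain ⟨t, ht, hsub⟩ := hc.exists_maxChain
  exact ⟨t, ⟨ht.1, fun h' hc' hsub' => (ht.2 hc' hsub').symm⟩, hsub rfl⟩

variable {Mo Ag PVar PConst : Type}

/-- `x` is presented at `(m0, h)`. -/
def Xc (F : JstitFrame Mo Ag) (S : Set Mo) (m0 : Mo) (h : Set Mo) : Prop :=
  m0 ∈ S ∨ ∃ m2 ∈ h, F.toTemporalFrame.Next m0 m2 ∧ m2 ∈ S

/-- additional condition under which `y` is presented at `(m0, h)`. -/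
def Dc (F : JstitFrame Mo Ag) (ms m1 : Mo) (m0 : Mo) (h : Set Mo) : Prop :=
  F.le ms m0 ∧ ∃ g ∈ F.toTemporalFrame.H m1, ∃ n,
    F.toTemporalFrame.lt ms n ∧ n ∈ h ∧ n ∈ g

def myAct (F : JstitFrame Mo Ag) (S : Set Mo) (ms m1 : Mo) (x y : PVar)
    (m0 : Mo) (h : Set Mo) : Set (Pol PVar PConst) :=
  {t | (t = Pol.var x ∧ Xc F S m0 h) ∨ (t = Pol.var y ∧ (Xc F S m0 h ∨ Dc F ms m1 m0 h))}

section Lemmas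

variable (F : JstitFrame Mo Ag) (S : Set Mo) (ms m1 : Mo)

theorem sRe (hRe : ∀ a b, a ∈ S → F.Re a b → b ∈ S) {a b : Mo}
    (ha : a ∈ S) (hab : F.le a b) : b ∈ S :=
  hRe a b ha (F.R_sub_Re (F.le_sub_R hab))

theorem Xc_up (hRe : ∀ a b, a ∈ S → F.Re a b → b ∈ S) {m' m0 : Mo} {h : Set Mo}
    (hlt : F.toTemporalFrame.lt m' m0) (hh : h ∈ F.toTemporalFrame.H m0)
    (hx : Xc F S m' h) : Xc F S m0 h := by
  rcases hx with hx | ⟨m2, hm2h, hnext, hm2S⟩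
  · exact Or.inl (sRe F S hRe hx hlt.1)
  · left
    rcases hist_comm F.toTemporalFrame hh.1 hm2h hh.2 with h1 | h1
    · exact sRe F S hRe hm2S h1
    · rcases eq_or_ne m0 m2 with rfl | hne
      · exact hm2S
      · exact absurd (F.le_antisymm hlt.1 (hnext.2 m0 ⟨h1, hne⟩)) hlt.2

theorem Dc_up {m' m0 : Mo} {h : Set Mo} (hlt : F.toTemporalFrame.lt m' m0)
    (hd : Dc F ms m1 m' h) : Dc F ms m1 m0 h :=
  ⟨F.le_trans hd.1 hlt.1, hd.2⟩

theorem Xc_div {m0 : Mo} {h k : Set Mo} (hh : h ∈ F.toTemporalFrame.H m0)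
    (hk : k ∈ F.toTemporalFrame.H m0)
    (hu : F.toTemporalFrame.Undiv m0 h k) (hx : Xc F S m0 h) : Xc F S m0 k := by
  rcases hx with hx | ⟨m2, hm2h, hnext, hm2S⟩
  · exact Or.inl hx
  · obtain ⟨n, hn, hnh, hnk⟩ := hu
    refine Or.inr ⟨m2, ?_, hnext, hm2S⟩
    rcases hist_comm F.toTemporalFrame hh.1 hm2h hnh with h1 | h1
    · exact hist_down F.toTemporalFrame hk.1 hnk h1
    · rcases eq_or_ne n m2 with rfl | hne
      · exact hnk
      · exact absurd (F.le_antisymm (hnext.2 n ⟨h1, hne⟩) hn.1) (Ne.symm hn.2)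

theorem Dc_div {m0 : Mo} {h k : Set Mo} (hh : h ∈ F.toTemporalFrame.H m0)
    (hk : k ∈ F.toTemporalFrame.H m0)
    (hu : F.toTemporalFrame.Undiv m0 h k) (hd : Dc F ms m1 m0 h) : Dc F ms m1 m0 k := by
  obtain ⟨hms, g, hg, n0, hn0lt, hn0h, hn0g⟩ := hd
  obtain ⟨n, hnlt, hnh, hnk⟩ := hu
  refine ⟨hms, g, hg, ?_⟩
  rcases hist_comm F.toTemporalFrame hh.1 hn0h hnh with h1 | h1
  · exact ⟨n0, hn0lt, hist_down F.toTemporalFrame hk.1 hnk h1, hn0g⟩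
  · exact ⟨n, ⟨F.le_trans hms hnlt.1,
      fun he => hnlt.2 (F.le_antisymm hnlt.1 (he ▸ hms))⟩, hnk,
      hist_down F.toTemporalFrame hg.1 hn0g h1⟩

theorem xkey
    (hc3 : ∀ p, (∀ h ∈ F.toTemporalFrame.H p,
      ∃ m2 ∈ h, F.toTemporalFrame.Next p m2 ∧ m2 ∈ S) → p ∈ S)
    {p : Mo} (hx : ∀ h ∈ F.toTemporalFrame.H p, Xc F S p h) : p ∈ S := by
  by_cases hp : p ∈ S
  · exact hp
  · refine hc3 p fun h hh => ?_
    rcases hx h hh with h1 | h1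
    · exact absurd h1 hp
    · exact h1

theorem ykey
    (hRe : ∀ a b, a ∈ S → F.Re a b → b ∈ S)
    (hc3 : ∀ p, (∀ h ∈ F.toTemporalFrame.H p,
      ∃ m2 ∈ h, F.toTemporalFrame.Next p m2 ∧ m2 ∈ S) → p ∈ S)
    (hsub : ∀ q, F.toTemporalFrame.lt ms q → F.le q m1 → q ∈ S)
    (hm1S : m1 ∈ S) (hmsS : ms ∉ S)
    {h' : Set Mo} (hh' : h' ∈ F.toTemporalFrame.H ms)
    (hdiv : ∀ g ∈ F.toTemporalFrame.H m1, ¬ F.toTemporalFrame.Undiv ms h' g)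
    (hnexth' : ∀ m' ∈ h', F.toTemporalFrame.Next ms m' → m' ∉ S)
    {p : Mo} (hy : ∀ h ∈ F.toTemporalFrame.H p, Xc F S p h ∨ Dc F ms m1 p h) :
    p ∈ S := by
  by_cases hall : ∀ h ∈ F.toTemporalFrame.H p, Xc F S p h
  · exact xkey F S hc3 hall
  push_neg at hall
  obtain ⟨h0, hh0, hnx⟩ := hall
  have hd : Dc F ms m1 p h0 := (hy h0 hh0).resolve_left hnx
  obtain ⟨hms, g0, hg0, n0, hn0lt, hn0h, hn0g⟩ := hd
  have hpne : p ≠ ms := by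
    rintro rfl
    rcases hy h' hh' with hx | hd'
    · rcases hx with hx | ⟨m2, hm2, hnext, hm2S⟩
      · exact hmsS hx
      · exact hnexth' m2 hm2 hnext hm2S
    · obtain ⟨-, g, hg, n, hnlt, hnh', hng⟩ := hd'
      exact hdiv g hg ⟨n, hnlt, hnh', hng⟩
  have hplt : F.toTemporalFrame.lt ms p := ⟨hms, Ne.symm hpne⟩
  rcases hist_comm F.toTemporalFrame hh0.1 hh0.2 hn0h with h1 | h1
  · have hpg0 : p ∈ g0 := hist_down F.toTemporalFrame hg0.1 hn0g h1
    rcases hist_comm F.toTemporalFrame hg0.1 hpg0 hg0.2 with h2 | h2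
    · exact hsub p hplt h2
    · exact sRe F S hRe hm1S h2
  · rcases hist_comm F.toTemporalFrame hg0.1 hn0g hg0.2 with h2 | h2
    · exact sRe F S hRe (hsub n0 hn0lt h2) h1
    · exact sRe F S hRe hm1S (F.le_trans h2 h1)

theorem spred
    (hc4 : ∀ p, p ∈ S →
      (∀ m2, F.toTemporalFrame.lt m2 p →
        ∃ m3, F.toTemporalFrame.lt m2 m3 ∧ F.toTemporalFrame.lt m3 p) →
      ∃ m4, F.toTemporalFrame.lt m4 p ∧ m4 ∈ S)
    {p : Mo} (hpS : p ∈ S) :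
    ∃ m4 h, F.toTemporalFrame.lt m4 p ∧ h ∈ F.toTemporalFrame.H p ∧ Xc F S m4 h := by
  obtain ⟨h, hh⟩ := exists_hist F.toTemporalFrame p
  by_cases hnext : ∃ m', F.toTemporalFrame.Next m' p
  · obtain ⟨m', hm'⟩ := hnext
    exact ⟨m', h, hm'.1, hh, Or.inr ⟨p, hh.2, hm', hpS⟩⟩
  · have hdense : ∀ m2, F.toTemporalFrame.lt m2 p →
        ∃ m3, F.toTemporalFrame.lt m2 m3 ∧ F.toTemporalFrame.lt m3 p := by
      intro m2 hm2
      by_contra hno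
      push_neg at hno
      refine hnext ⟨m2, hm2, fun m'' hm'' => ?_⟩
      rcases F.no_backward p m'' m2 hm''.1 hm2.1 with h1 | h1
      · exact h1
      · rcases eq_or_ne m2 m'' with rfl | hne
        · exact F.le_refl _
        · exact absurd hm'' (hno m'' ⟨h1, hne⟩)
    obtain ⟨m4, hm4, hm4S⟩ := hc4 p hpS hdense
    exact ⟨m4, h, hm4, hh, Or.inl hm4S⟩

end Lemmas

end Stmt15Aux
/-- Lemma 6: every non-regular jstit frame carries a CS-normal jstit
model falsifying `K(□Ex ∨ ¬□Ey) → (Ex ∨ ¬Ey)` at some moment-history pair. -/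
theorem stmt15 {Mo Ag PVar PConst PropVar : Type} [Finite Ag]
    [Countable PVar] [Infinite PVar] [Countable PConst] [Infinite PConst]
    [Countable PropVar] [Infinite PropVar] [Inhabited PropVar]
    (CS : Set (Form Ag PVar PConst PropVar)) (hCS : IsConstSpec CS)
    (x y : PVar) (hxy : x ≠ y)
    (F : JstitFrame Mo Ag) (hF : ¬ F.Regular) :
    ∃ M : JstitModel Mo Ag PVar PConst PropVar,
      M.toJstitFrame = F ∧ CSNormal CS M ∧
      ∃ m h, h ∈ M.toTemporalFrame.H m ∧
        ¬ M.Sat (Form.imp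
            (Form.know (Form.or (Form.box (Form.ann (Pol.var x)))
              (Form.neg (Form.box (Form.ann (Pol.var y))))))
            (Form.or (Form.ann (Pol.var x)) (Form.neg (Form.ann (Pol.var y))))) m h := by

  classical
  simp only [JstitFrame.Regular] at hF
  push_neg at hF
  obtain ⟨ms, m1, hlt, hprem, hnoNext⟩ := hF
  obtain ⟨S, hTh, hmsS, h', hh', hdiv, hnexth'⟩ := hprem
  obtain ⟨hm1S, hRe, hc3, hc4⟩ := hTh m1 hlt (F.le_refl m1)
  have hsub : ∀ q, F.toTemporalFrame.lt ms q → F.le q m1 → q ∈ S :=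
    fun q h1 h2 => (hTh q h1 h2).1
  -- the guarantee of `x` or `y` at a moment forces membership in `S`
  have hguarS : ∀ (m : Mo) (t : Pol PVar PConst),
      (∀ h ∈ F.toTemporalFrame.H m,
        t ∈ Stmt15Aux.myAct F S ms m1 x y m h) → m ∈ S := by
    intro m t hgt
    obtain ⟨h0, hh0⟩ := Stmt15Aux.exists_hist F.toTemporalFrame m
    rcases hgt h0 hh0 with ⟨rfl, -⟩ | ⟨rfl, -⟩
    · refine Stmt15Aux.xkey F S hc3 fun h hh => ?_
      rcases hgt h hh with ⟨-, hx⟩ | ⟨he, -⟩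
      · exact hx
      · injection he with he'; exact absurd he' hxy
    · refine Stmt15Aux.ykey F S ms m1 hRe hc3 hsub hm1S hmsS hh' hdiv hnexth'
        fun h hh => ?_
      rcases hgt h hh with ⟨he, -⟩ | ⟨-, hx⟩
      · injection he with he'; exact absurd he'.symm hxy
      · exact hx
  obtain ⟨g, hg⟩ := Stmt15Aux.exists_hist F.toTemporalFrame m1
  have hgms : g ∈ F.toTemporalFrame.H ms :=
    ⟨hg.1, Stmt15Aux.hist_down F.toTemporalFrame hg.1 hg.2 hlt.1⟩
  refine ⟨{ toJstitFrame := F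
            act := Stmt15Aux.myAct F S ms m1 x y
            ev := fun _ _ => Set.univ
            val := fun _ => ∅
            ev_mono := fun _ _ _ _ => Set.Subset.rfl
            ev_app := fun _ _ _ _ _ _ _ => Set.mem_univ _
            ev_sum_left := fun _ _ _ => Set.subset_univ _
            ev_sum_right := fun _ _ _ => Set.subset_univ _
            ev_bang := fun _ _ _ _ => Set.mem_univ _
            expansion := ?_
            no_new := ?_
            divide := ?_
            transparent := ?_ }, rfl, fun _ _ _ _ => Set.mem_univ _, ms, g, hgms, ?_⟩
  · -- expansion
    intro m m' h hlt' hh t ht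
    rcases ht with ⟨he, hx⟩ | ⟨he, hx⟩
    · exact Or.inl ⟨he, Stmt15Aux.Xc_up F S hRe hlt' hh hx⟩
    · refine Or.inr ⟨he, ?_⟩
      rcases hx with hx | hd
      · exact Or.inl (Stmt15Aux.Xc_up F S hRe hlt' hh hx)
      · exact Or.inr (Stmt15Aux.Dc_up F ms m1 hlt' hd)
  · -- no_new
    intro m t hgt
    have hmS : m ∈ S := hguarS m t hgt
    obtain ⟨m4, h, hlt4, hh, hx4⟩ := Stmt15Aux.spred F S hc4 hmS
    obtain ⟨h0, hh0⟩ := Stmt15Aux.exists_hist F.toTemporalFrame m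
    rcases hgt h0 hh0 with ⟨rfl, -⟩ | ⟨rfl, -⟩
    · exact ⟨m4, h, hlt4, hh, Or.inl ⟨rfl, hx4⟩⟩
    · exact ⟨m4, h, hlt4, hh, Or.inr ⟨rfl, Or.inl hx4⟩⟩
  · -- divide
    intro m h k hh hk hu
    have hu' : F.toTemporalFrame.Undiv m k h := by
      obtain ⟨n, h1, h2, h3⟩ := hu
      exact ⟨n, h1, h3, h2⟩
    ext t
    constructor
    · rintro (⟨he, hx⟩ | ⟨he, hx | hd⟩)
      · exact Or.inl ⟨he, Stmt15Aux.Xc_div F S hh hk hu hx⟩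
      · exact Or.inr ⟨he, Or.inl (Stmt15Aux.Xc_div F S hh hk hu hx)⟩
      · exact Or.inr ⟨he, Or.inr (Stmt15Aux.Dc_div F ms m1 hh hk hu hd)⟩
    · rintro (⟨he, hx⟩ | ⟨he, hx | hd⟩)
      · exact Or.inl ⟨he, Stmt15Aux.Xc_div F S hk hh hu' hx⟩
      · exact Or.inr ⟨he, Or.inl (Stmt15Aux.Xc_div F S hk hh hu' hx)⟩
      · exact Or.inr ⟨he, Or.inr (Stmt15Aux.Dc_div F ms m1 hk hh hu' hd)⟩
  · -- transparent
    intro m m' t hre hgt h'' hh''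
    have hmS : m ∈ S := hguarS m t hgt
    have hm'S : m' ∈ S := hRe m m' hmS hre
    obtain ⟨h0, hh0⟩ := Stmt15Aux.exists_hist F.toTemporalFrame m
    rcases hgt h0 hh0 with ⟨rfl, -⟩ | ⟨rfl, -⟩
    · exact Or.inl ⟨rfl, Or.inl hm'S⟩
    · exact Or.inr ⟨rfl, Or.inl (Or.inl hm'S)⟩
  · -- the falsification at (ms, g)
    intro hsat
    simp only [Form.imp, Form.or, JstitModel.Sat, not_not] at hsat
    refine hsat ⟨?_, ?_, ?_⟩
    · -- K(□Ex ∨ ¬□Ey) holds at (ms, g)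
      rintro p hp hR hhp ⟨hnx, hyG⟩
      have hpS : p ∈ S := hguarS p (Pol.var y) hyG
      exact hnx fun h'' hh'' => Or.inl ⟨rfl, Or.inl hpS⟩
    · -- ¬ Ex at (ms, g)
      rintro (⟨-, hx⟩ | ⟨he, -⟩)
      · rcases hx with hx | ⟨m2, hm2g, hnext2, hm2S⟩
        · exact hmsS hx
        · rcases Stmt15Aux.hist_comm F.toTemporalFrame hg.1 hm2g hg.2 with h1 | h1
          · exact hnoNext m2 h1 hnext2
          · rcases eq_or_ne m1 m2 with rfl | hne
            · exact hnoNext m1 (F.le_refl m1) hnext2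
            · exact absurd (F.le_antisymm hlt.1 (hnext2.2 m1 ⟨h1, hne⟩)) hlt.2
      · injection he with he'; exact absurd he' hxy
    · -- Ey at (ms, g)
      exact Or.inr ⟨rfl, Or.inr ⟨F.le_refl ms, g, hg, m1, hlt, hg.2, hg.2⟩⟩
end
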